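/- Let m ≥ 2 and let I : [0, r] → [0, ∞) be monotone nondecreasing and absolutely continuous with I(0) = 0, and suppose I(r) ≤ K·r^m for some constant K > 0. Then for every subset W ⊂ (r/2, r) of full Lebesgue measure there exists r' ∈ W such that I'(r') ≤ 2m·(K)^{1/m}·I(r')^{(m−1)/m}. -/

import Mathlib

open MeasureTheory Set Filter

lemma aux_pow_sub (n : ℕ) {x y : ℝ} (hx : 0 ≤ x) (hxy : x ≤ y) :
    y ^ n - x ^ n ≤ n * y ^ (n - 1) * (y - x) := by
  induction n with
  | zero => simp
  | succ n ih =>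
    have hy : 0 ≤ y := hx.trans hxy
    have h1 : y ^ (n + 1) - x ^ (n + 1) = y * (y ^ n - x ^ n) + (y - x) * x ^ n := by ring
    have h2 : y * (y ^ n - x ^ n) ≤ y * (n * y ^ (n - 1) * (y - x)) :=
      mul_le_mul_of_nonneg_left ih hy
    have h3 : (y - x) * x ^ n ≤ (y - x) * y ^ n :=
      mul_le_mul_of_nonneg_left (pow_le_pow_left₀ hx hxy n) (by linarith)
    have h4 : y * ((n : ℝ) * y ^ (n - 1) * (y - x)) ≤ n * y ^ n * (y - x) := by
      cases n with
      | zero => simp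
      | succ k =>
        have hyy : y * y ^ (k + 1 - 1) = y ^ (k + 1) := by
          rw [Nat.add_sub_cancel, ← pow_succ']
        rw [show y * ((↑(k + 1) : ℝ) * y ^ (k + 1 - 1) * (y - x))
            = (↑(k + 1) : ℝ) * (y * y ^ (k + 1 - 1)) * (y - x) from by ring, hyy]
    have hgoal : (↑(n + 1) : ℝ) * y ^ (n + 1 - 1) * (y - x)
        = (n : ℝ) * y ^ n * (y - x) + y ^ n * (y - x) := by
      rw [Nat.add_sub_cancel]; push_cast; ring
    rw [hgoal]
    nlinarith [pow_nonneg hy n]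

lemma aux_rpow_pow (m : ℕ) (hm : 2 ≤ m) {x : ℝ} (hx : 0 ≤ x) :
    (x ^ m) ^ (((m : ℝ) - 1) / m) = x ^ (m - 1) := by
  rw [← Real.rpow_natCast_mul hx m (((m : ℝ) - 1) / m)]
  have hm0 : (m : ℝ) ≠ 0 := by positivity
  have : (m : ℝ) * (((m : ℝ) - 1) / m) = ((m - 1 : ℕ) : ℝ) := by
    have h1 : 1 ≤ m := by omega
    push_cast [h1]
    field_simp
  rw [this, Real.rpow_natCast]

lemma core_ineq (m : ℕ) (hm : 2 ≤ m) {c θ y δ y₀ : ℝ} (hc : 0 < c) (hθ0 : 0 < θ)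
    (hθ1 : θ < 1) (hy₀ : 0 < y₀) (hy : y₀ ≤ y) (hδ0 : 0 ≤ δ)
    (hδ : 2 * c * δ ≤ y₀ * (θ ^ (-(((m : ℝ) - 1)⁻¹)) - 1)) :
    (y + 2 * c * θ * δ) ^ m ≤ y ^ m + 2 * m * c * y ^ (m - 1) * δ := by
  set l := θ ^ (-(((m : ℝ) - 1)⁻¹)) with hl
  have hm1 : (0:ℝ) < (m : ℝ) - 1 := by
    have : (2:ℝ) ≤ (m:ℝ) := by exact_mod_cast hm
    linarith
  have hl1 : 1 < l := by
    rw [hl]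
    apply Real.one_lt_rpow_iff_of_pos hθ0 |>.2
    right
    exact ⟨hθ1, by simp [inv_pos.2 hm1]⟩
  have hy0 : 0 < y := lt_of_lt_of_le hy₀ hy
  set η := 2 * c * θ * δ with hη
  have hη0 : 0 ≤ η := by positivity
  have hηle : η ≤ y * (l - 1) := by
    have h1 : η ≤ 2 * c * δ := by
      rw [hη]; nlinarith
    have h2 : y₀ * (l - 1) ≤ y * (l - 1) := by nlinarith
    linarith
  have hb : y + η ≤ l * y := by nlinarith
  have hps := aux_pow_sub m (le_of_lt hy0) (by linarith : y ≤ y + η)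
  have hbm : (y + η) ^ (m - 1) ≤ (l * y) ^ (m - 1) :=
    pow_le_pow_left₀ (by linarith) hb (m - 1)
  have hlm : l ^ (m - 1) * θ = 1 := by
    rw [hl, ← Real.rpow_natCast (θ ^ (-(((m : ℝ) - 1)⁻¹))) (m-1), ← Real.rpow_mul hθ0.le]
    have hcast : ((m - 1 : ℕ) : ℝ) = (m : ℝ) - 1 := by
      have : 1 ≤ m := by omega
      push_cast [this]; ring
    rw [hcast, show -(((m : ℝ) - 1)⁻¹) * ((m:ℝ) - 1) = -1 from by field_simp]
    rw [Real.rpow_neg_one]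
    field_simp
  have hmain : (m:ℝ) * (y + η) ^ (m - 1) * η ≤ 2 * m * c * y ^ (m - 1) * δ := by
    have hml : (l * y) ^ (m - 1) = l ^ (m-1) * y ^ (m-1) := mul_pow l y (m-1)
    have h5 : (m:ℝ) * (y + η) ^ (m - 1) * η ≤ (m:ℝ) * (l ^ (m-1) * y ^ (m-1)) * η := by
      have := hbm
      rw [hml] at this
      have hm0 : (0:ℝ) ≤ (m:ℝ) := by positivity
      exact mul_le_mul_of_nonneg_right (mul_le_mul_of_nonneg_left this hm0) hη0
    have h6 : (m:ℝ) * (l ^ (m-1) * y ^ (m-1)) * η = 2 * m * c * y ^ (m-1) * δ * (l ^ (m-1) * θ) := by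
      rw [hη]; ring
    rw [h6, hlm, mul_one] at h5
    exact h5
  linarith

/-- choice of a good radius. If `I` is monotone nondecreasing,
absolutely continuous (encoded via FTC for its derivative), `I 0 = 0` and
`I r ≤ K r^m`, then every full-measure subset `W` of `(r/2, r)` contains a radius
`r'` at which `I'(r') ≤ 2m K^{1/m} I(r')^{(m-1)/m}`. -/
theorem good_radius_exists (m : ℕ) (hm : 2 ≤ m) (r K : ℝ) (hr : 0 < r) (hK : 0 < K)
    (I : ℝ → ℝ)
    (hmono : MonotoneOn I (Set.Icc 0 r))
    (hnonneg : ∀ s ∈ Set.Icc (0 : ℝ) r, 0 ≤ I s)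
    (hI0 : I 0 = 0)
    (hAC : ∀ a b : ℝ, 0 ≤ a → a ≤ b → b ≤ r → I b - I a = ∫ t in a..b, deriv I t)
    (hIr : I r ≤ K * r ^ m)
    (W : Set ℝ) (hW : W ⊆ Set.Ioo (r / 2) r)
    (hWfull : volume (Set.Ioo (r / 2) r \ W) = 0) :
    ∃ r' ∈ W, deriv I r' ≤ 2 * m * K ^ (1 / (m : ℝ)) * I r' ^ ((m - 1 : ℝ) / m) := by
  by_contra hcontra
  push_neg at hcontra
  set a := r / 2 with ha_def
  have ha0 : 0 < a := half_pos hr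
  have har : a < r := half_lt_self hr
  set c := K ^ (1 / (m:ℝ)) with hc_def
  have hcon : ∀ w ∈ W, 2 * (m:ℝ) * c * I w ^ (((m:ℝ) - 1) / m) < deriv I w := hcontra
  have hm0 : m ≠ 0 := by omega
  have hmR : (2:ℝ) ≤ (m:ℝ) := by exact_mod_cast hm
  have hc : 0 < c := Real.rpow_pos_of_pos hK _
  have hcm : c ^ m = K := by
    rw [hc_def, one_div]; exact Real.rpow_inv_natCast_pow hK.le hm0
  have hpnn : 0 ≤ ((m:ℝ) - 1) / m := by
    apply div_nonneg (by linarith) (by positivity)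
  -- full measure gives points of W in subintervals
  have hWpt : ∀ u v : ℝ, a ≤ u → u < v → v ≤ r → ∃ w, w ∈ W ∧ w ∈ Ioo u v := by
    intro u v hu huv hv
    rcases (W ∩ Ioo u v).eq_empty_or_nonempty with he | ⟨w, hw⟩
    · exfalso
      have hsub : Ioo u v ⊆ Ioo a r \ W := by
        intro x hx
        refine ⟨⟨lt_of_le_of_lt hu hx.1, lt_of_lt_of_le hx.2 hv⟩, fun hxW => ?_⟩
        have hmem : x ∈ W ∩ Ioo u v := ⟨hxW, hx⟩
        rw [he] at hmem
        exact hmem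
      have := measure_mono_null hsub hWfull
      rw [Real.volume_Ioo] at this
      exact (ENNReal.ofReal_pos.2 (by linarith)).ne' this
    · exact ⟨w, hw.1, hw.2⟩
  have hIcc : ∀ {t : ℝ}, a ≤ t → t ≤ r → t ∈ Icc (0:ℝ) r := fun h1 h2 =>
    ⟨le_trans ha0.le h1, h2⟩
  have hImono : ∀ s t : ℝ, a ≤ s → s ≤ t → t ≤ r → I s ≤ I t := fun s t hs hst htr =>
    hmono (hIcc hs (hst.trans htr)) (hIcc (hs.trans hst) htr) hst
  -- derivative vanishes on intervals of constancy
  have hderivconst : ∀ (u v k τ : ℝ), τ ∈ Ioo u v → (∀ x ∈ Ioo u v, I x = k) →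
      deriv I τ = 0 := by
    intro u v k τ hτ hk
    have hev : I =ᶠ[nhds τ] fun _ => k :=
      Filter.eventuallyEq_of_mem (Ioo_mem_nhds hτ.1 hτ.2) hk
    rw [hev.deriv_eq, deriv_const]
  -- integrability of the derivative
  have hDint : ∀ s t : ℝ, a ≤ s → s < t → t ≤ r →
      IntervalIntegrable (deriv I) volume s t := by
    intro s t hs hst htr
    by_contra hni
    have h0s : (0:ℝ) ≤ s := ha0.le.trans hs
    have hni' : ¬ IntegrableOn (deriv I) (Ioc s t) volume := fun h =>
      hni ((intervalIntegrable_iff_integrableOn_Ioc_of_le hst.le).2 h)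
    have heq := hAC s t h0s hst.le htr
    rw [intervalIntegral.integral_of_le hst.le, MeasureTheory.integral_undef hni'] at heq
    have hconst : ∀ x ∈ Ioo s t, I x = I s := by
      intro x hx
      have h1 : I s ≤ I x := hImono s x hs hx.1.le (hx.2.le.trans htr)
      have h2 : I x ≤ I t := hImono x t (hs.trans hx.1.le) hx.2.le htr
      linarith
    apply hni'
    rw [integrableOn_Ioc_iff_integrableOn_Ioo]
    apply (integrable_zero _ _ _).congr
    rw [Filter.EventuallyEq, ae_restrict_iff' measurableSet_Ioo]
    refine ae_of_all _ fun τ hτ => ?_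
    exact (hderivconst s t (I s) τ hτ hconst).symm
  -- growth inequality
  have hgrow : ∀ s t : ℝ, a ≤ s → s ≤ t → t ≤ r →
      I s + 2 * (m:ℝ) * c * I s ^ (((m:ℝ) - 1) / m) * (t - s) ≤ I t := by
    intro s t hs hst htr
    rcases eq_or_lt_of_le hst with rfl | hst'
    · simp
    have h0s : (0:ℝ) ≤ s := ha0.le.trans hs
    have hint := hDint s t hs hst' htr
    have hcint : IntervalIntegrable (fun _ : ℝ => 2 * (m:ℝ) * c * I s ^ (((m:ℝ) - 1) / m))
        volume s t := intervalIntegrable_const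
    have hnull : volume ((Ioo a r \ W) ∪ ({s} ∪ {t})) = 0 := by
      refine measure_union_null hWfull (measure_union_null ?_ ?_) <;>
        exact Real.volume_singleton
    have hae : (fun _ : ℝ => 2 * (m:ℝ) * c * I s ^ (((m:ℝ) - 1) / m))
        ≤ᵐ[volume.restrict (Icc s t)] deriv I := by
      rw [EventuallyLE, ae_restrict_iff' measurableSet_Icc]
      have hae0 : ∀ᵐ τ : ℝ, τ ∉ (Ioo a r \ W) ∪ ({s} ∪ {t}) :=
        measure_eq_zero_iff_ae_notMem.1 hnull
      filter_upwards [hae0] with τ hτ hmem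
      simp only [Set.mem_union, Set.mem_singleton_iff, Set.mem_diff, not_or] at hτ
      obtain ⟨hτ1, hτ2, hτ3⟩ := hτ
      have hτIoo : τ ∈ Ioo s t := ⟨lt_of_le_of_ne hmem.1 (Ne.symm hτ2), lt_of_le_of_ne hmem.2 hτ3⟩
      have hτar : τ ∈ Ioo a r := ⟨lt_of_le_of_lt hs hτIoo.1, lt_of_lt_of_le hτIoo.2 htr⟩
      have hτW : τ ∈ W := by
        by_contra hnw
        exact hτ1 ⟨hτar, hnw⟩
      have hlt := hcon τ hτW
      have hIle : I s ≤ I τ := hImono s τ hs hτIoo.1.le (hτIoo.2.le.trans htr)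
      have hrle : I s ^ (((m:ℝ) - 1) / m) ≤ I τ ^ (((m:ℝ) - 1) / m) :=
        Real.rpow_le_rpow (hnonneg s ⟨h0s, hst.trans htr⟩) hIle hpnn
      have h1 : 2 * (m:ℝ) * c * I s ^ (((m:ℝ) - 1) / m)
          ≤ 2 * (m:ℝ) * c * I τ ^ (((m:ℝ) - 1) / m) :=
        mul_le_mul_of_nonneg_left hrle (by positivity)
      linarith
    have hmono_int := intervalIntegral.integral_mono_ae_restrict hst hcint hint hae
    rw [intervalIntegral.integral_const, smul_eq_mul] at hmono_int
    have heq := hAC s t h0s hst htr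
    rw [← heq] at hmono_int
    linarith
  -- positivity on (a, r]
  have hIpos : ∀ s : ℝ, a < s → s ≤ r → 0 < I s := by
    intro s hs hsr
    rcases lt_or_eq_of_le (hnonneg s ⟨(ha0.trans hs).le, hsr⟩) with h | h
    · exact h
    exfalso
    have hconst : ∀ x ∈ Ioo a s, I x = 0 := by
      intro x hx
      have h1 : I x ≤ I s := hImono x s hx.1.le hx.2.le hsr
      have h2 : 0 ≤ I x := hnonneg x ⟨(ha0.trans hx.1).le, hx.2.le.trans hsr⟩
      linarith
    obtain ⟨w, hwW, hw⟩ := hWpt a s le_rfl hs hsr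
    have hD0 : deriv I w = 0 := hderivconst a s 0 w hw hconst
    have hlt := hcon w hwW
    rw [hD0, hconst w hw,
      Real.zero_rpow (div_pos (by linarith : (0:ℝ) < (m:ℝ) - 1) (by positivity)).ne'] at hlt
    linarith
  -- the m-th root of I
  set J := fun t : ℝ => I t ^ ((m:ℝ)⁻¹) with hJ_def
  have hJnn : ∀ t : ℝ, a ≤ t → t ≤ r → 0 ≤ J t := fun t h1 h2 =>
    Real.rpow_nonneg (hnonneg t (hIcc h1 h2)) _
  have hJpow : ∀ t : ℝ, a ≤ t → t ≤ r → (J t) ^ m = I t := fun t h1 h2 =>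
    Real.rpow_inv_natCast_pow (hnonneg t (hIcc h1 h2)) hm0
  have hJmono : ∀ s t : ℝ, a ≤ s → s ≤ t → t ≤ r → J s ≤ J t := fun s t hs hst htr =>
    Real.rpow_le_rpow (hnonneg s (hIcc hs (hst.trans htr))) (hImono s t hs hst htr)
      (by positivity)
  have hrootle : ∀ x t : ℝ, 0 ≤ x → a ≤ t → t ≤ r → x ^ m ≤ I t → x ≤ J t := by
    intro x t hx h1 h2 hle
    have h3 := Real.rpow_le_rpow (pow_nonneg hx m) hle (by positivity : (0:ℝ) ≤ (m:ℝ)⁻¹)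
    rwa [Real.pow_rpow_inv_natCast hx hm0] at h3
  -- comparison with the ODE solution, starting from positive data
  have hCMP : ∀ s₀ : ℝ, a < s₀ → s₀ ≤ r → ∀ t : ℝ, s₀ ≤ t → t ≤ r →
      J s₀ + 2 * c * (t - s₀) ≤ J t := by
    intro s₀ hs₀ hs₀r
    have hy₀ : 0 < J s₀ := Real.rpow_pos_of_pos (hIpos s₀ hs₀ hs₀r) _
    have hm1 : (0:ℝ) < (m:ℝ) - 1 := by linarith
    have hθver : ∀ θ : ℝ, 0 < θ → θ < 1 → ∀ t : ℝ, s₀ ≤ t → t ≤ r →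
        J s₀ + 2 * c * θ * (t - s₀) ≤ J t := by
      intro θ hθ0 hθ1
      set l := θ ^ (-(((m : ℝ) - 1)⁻¹)) with hl
      have hl1 : 1 < l := by
        rw [hl]
        exact (Real.one_lt_rpow_iff_of_pos hθ0).2 (Or.inr ⟨hθ1, by simp [inv_pos.2 hm1]⟩)
      set δ₀ := J s₀ * (l - 1) / (2 * c) with hδ₀_def
      have hδ₀ : 0 < δ₀ := by
        apply div_pos (mul_pos hy₀ (by linarith)) (by positivity)
      have hstep : ∀ k : ℕ, ∀ t : ℝ, s₀ ≤ t → t ≤ r → t ≤ s₀ + k * δ₀ →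
          J s₀ + 2 * c * θ * (t - s₀) ≤ J t := by
        intro k
        induction k with
        | zero =>
          intro t h1 h2 h3
          simp only [Nat.cast_zero, zero_mul, add_zero] at h3
          have ht : t = s₀ := le_antisymm h3 h1
          subst ht
          simp
        | succ k ih =>
          intro t h1 h2 h3
          set t₁ := max s₀ (t - δ₀) with ht₁
          have ht₁s : s₀ ≤ t₁ := le_max_left _ _
          have ht₁t : t₁ ≤ t := max_le h1 (by linarith)
          have ht₁r : t₁ ≤ r := ht₁t.trans h2
          have hδle : t - t₁ ≤ δ₀ := by
            rw [ht₁]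
            rcases le_total s₀ (t - δ₀) with h | h
            · rw [max_eq_right h]; linarith
            · rw [max_eq_left h]; linarith
          have ht₁k : t₁ ≤ s₀ + k * δ₀ := by
            apply max_le
            · have hkd : 0 ≤ (k:ℝ) * δ₀ := by positivity
              linarith
            · push_cast at h3
              linarith
          have hIH := ih t₁ ht₁s ht₁r ht₁k
          have hyy₀ : J s₀ ≤ J t₁ := hJmono s₀ t₁ hs₀.le ht₁s ht₁r
          have hy0 : 0 < J t₁ := lt_of_lt_of_le hy₀ hyy₀
          have hδnn : 0 ≤ t - t₁ := by linarith
          have hg := hgrow t₁ t (hs₀.le.trans ht₁s) ht₁t h2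
          have hIt₁ : I t₁ = (J t₁) ^ m := (hJpow t₁ (hs₀.le.trans ht₁s) ht₁r).symm
          have hIp : I t₁ ^ (((m:ℝ) - 1) / m) = (J t₁) ^ (m - 1) := by
            rw [hIt₁]; exact aux_rpow_pow m hm hy0.le
          rw [hIp, hIt₁] at hg
          have hbound : 2 * c * (t - t₁) ≤ J s₀ * (l - 1) := by
            have : 2 * c * (t - t₁) ≤ 2 * c * δ₀ :=
              mul_le_mul_of_nonneg_left hδle (by positivity)
            rw [hδ₀_def] at this
            rw [show 2 * c * (J s₀ * (l - 1) / (2 * c)) = J s₀ * (l - 1) from by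
              field_simp] at this
            exact this
          have hcore := core_ineq m hm hc hθ0 hθ1 hy₀ hyy₀ hδnn hbound
          have hfin : (J t₁ + 2 * c * θ * (t - t₁)) ^ m ≤ I t := le_trans hcore (by linarith)
          have hroot := hrootle (J t₁ + 2 * c * θ * (t - t₁)) t (by positivity)
            (hs₀.le.trans h1) h2 hfin
          linarith [hIH, hroot]
      intro t h1 h2
      obtain ⟨k, hk⟩ := exists_nat_ge ((t - s₀) / δ₀)
      apply hstep k t h1 h2
      rw [div_le_iff₀ hδ₀] at hk
      linarith
    intro t h1 h2
    by_contra hlt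
    push_neg at hlt
    have hts : s₀ < t := by
      rcases lt_or_eq_of_le h1 with h | h
      · exact h
      · exfalso; rw [← h] at hlt; linarith
    have hg0 : 0 ≤ J t - J s₀ := sub_nonneg.2 (hJmono s₀ t hs₀.le h1 h2)
    have hden : 0 < 2 * c * (t - s₀) := by
      apply mul_pos (by positivity) (by linarith)
    set g := J t - J s₀ with hgdef
    have hglt : g < 2 * c * (t - s₀) := by rw [hgdef]; linarith
    set θ := (g / (2 * c * (t - s₀)) + 1) / 2 with hθdef
    have hratio : g / (2 * c * (t - s₀)) < 1 := (div_lt_one hden).2 hglt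
    have hrat0 : 0 ≤ g / (2 * c * (t - s₀)) := div_nonneg hg0 hden.le
    have hθ0 : 0 < θ := by rw [hθdef]; linarith
    have hθ1 : θ < 1 := by rw [hθdef]; linarith
    have hv := hθver θ hθ0 hθ1 t h1 h2
    have h2cθ : g < 2 * c * θ * (t - s₀) := by
      have hgt : g / (2 * c * (t - s₀)) < θ := by rw [hθdef]; linarith
      calc g = g / (2 * c * (t - s₀)) * (2 * c * (t - s₀)) := by rw [div_mul_cancel₀ _ hden.ne']
        _ < θ * (2 * c * (t - s₀)) := by
            exact mul_lt_mul_of_pos_right hgt hden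
        _ = 2 * c * θ * (t - s₀) := by ring
    rw [hgdef] at h2cθ
    linarith
  -- upper bound on J r
  have hJr : J r ≤ c * r := by
    have h1 : I r ≤ (c * r) ^ m := by rw [mul_pow, hcm]; exact hIr
    have h2 := Real.rpow_le_rpow (hnonneg r ⟨hr.le, le_rfl⟩) h1
      (by positivity : (0:ℝ) ≤ (m:ℝ)⁻¹)
    rwa [Real.pow_rpow_inv_natCast (by positivity) hm0] at h2
  -- lower bound on J
  have hJlow : ∀ s : ℝ, a < s → s ≤ r → 2 * c * (s - a) ≤ J s := by
    intro s hs hsr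
    by_contra hlt
    push_neg at hlt
    have hJs0 : 0 ≤ J s := hJnn s hs.le hsr
    obtain ⟨u, hu⟩ : ∃ u : ℝ, u = s - J s / (2 * c) := ⟨_, rfl⟩
    have hau : a < u := by
      rw [hu]
      have : J s / (2 * c) < s - a := (div_lt_iff₀ (by positivity)).2 (by linarith)
      linarith
    have hus : u ≤ s := by
      rw [hu]
      have : 0 ≤ J s / (2 * c) := by positivity
      linarith
    obtain ⟨s₀, hs₀def⟩ : ∃ s₀ : ℝ, s₀ = (a + u) / 2 := ⟨_, rfl⟩
    have hs₀1 : a < s₀ := by rw [hs₀def]; linarith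
    have hs₀2 : s₀ < u := by rw [hs₀def]; linarith
    have hs₀r : s₀ ≤ r := by linarith
    have hcmp := hCMP s₀ hs₀1 hs₀r s (by linarith) hsr
    have hJs₀ : 0 ≤ J s₀ := hJnn s₀ hs₀1.le hs₀r
    have hueq : 2 * c * (s - u) = J s := by
      rw [hu]
      have h2c : (2 * c) ≠ 0 := by positivity
      field_simp
      ring
    have hprod : 0 < 2 * c * (u - s₀) := mul_pos (by positivity) (by linarith)
    linarith
  -- endgame
  by_cases hex : ∃ s : ℝ, a < s ∧ s < r ∧ 2 * c * (s - a) < J s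
  · obtain ⟨s, hs1, hs2, hs3⟩ := hex
    have hcmp := hCMP s hs1 hs2.le r hs2.le le_rfl
    have h2 : 2 * c * (r - a) = c * r := by rw [ha_def]; ring
    linarith
  · push_neg at hex
    obtain ⟨w, hwW, hw⟩ := hWpt a r le_rfl har le_rfl
    have hIform : ∀ x ∈ Ioo a r, I x = (2 * c * (x - a)) ^ m := by
      intro x hx
      have h1 := hJlow x hx.1 hx.2.le
      have h2 := hex x hx.1 hx.2
      have h3 : J x = 2 * c * (x - a) := le_antisymm h2 h1
      have h4 := hJpow x hx.1.le hx.2.le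
      rw [h3] at h4
      exact h4.symm
    have hd : deriv I w = (m:ℝ) * (2 * c * (w - a)) ^ (m - 1) * (2 * c) := by
      have hev : I =ᶠ[nhds w] fun x => (2 * c * (x - a)) ^ m :=
        Filter.eventuallyEq_of_mem (Ioo_mem_nhds hw.1 hw.2) hIform
      rw [hev.deriv_eq]
      have h1 : HasDerivAt (fun x : ℝ => 2 * c * (x - a)) (2 * c) w := by
        simpa using ((hasDerivAt_id w).sub_const a).const_mul (2 * c)
      exact (h1.pow m).deriv
    have hlt := hcon w hwW
    have hx0 : 0 ≤ 2 * c * (w - a) := mul_nonneg (by positivity) (by linarith [hw.1])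
    rw [hIform w hw, aux_rpow_pow m hm hx0, hd] at hlt
    have heq : 2 * (m:ℝ) * c * (2 * c * (w - a)) ^ (m - 1)
        = (m:ℝ) * (2 * c * (w - a)) ^ (m - 1) * (2 * c) := by ring
    linarith
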